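/- arXiv:2103.01379 — 2 statements merged into one kernel-verified Lean document; each statement's English description precedes it below -/
import Mathlib

section
/- Let ε ≥ 0, δ ∈ [0,1), and let P, Q be probability measures on a measurable space with P ≪ Q. If P({x : |log((dP/dQ)(x))| ≤ ε}) ≥ 1 − δ, then for every measurable set S, P(S) ≤ e^ε · Q(S) + δ. -/
open MeasureTheory

/-- A high-probability bound on the privacy loss implies `(ε, δ)`-DP: if with `P`-probability
at least `1 - δ` we have `|log((dP/dQ)(x))| ≤ ε`, then for every measurable set `S`,
`P(S) ≤ e^ε · Q(S) + δ`. -/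
theorem privacy_loss_bound_implies_approx_dp {X : Type*} [MeasurableSpace X]
    (ε : ℝ) (hε : 0 ≤ ε) (δ : ℝ) (hδ : δ ∈ Set.Ico (0 : ℝ) 1)
    (P Q : Measure X) [IsProbabilityMeasure P] [IsProbabilityMeasure Q]
    (hPQ : P ≪ Q)
    (h : ENNReal.ofReal (1 - δ) ≤ P {x | |Real.log (P.rnDeriv Q x).toReal| ≤ ε}) :
    ∀ S : Set X, MeasurableSet S →
      P S ≤ ENNReal.ofReal (Real.exp ε) * Q S + ENNReal.ofReal δ := by
  intro S hS
  set A : Set X := {x | |Real.log (P.rnDeriv Q x).toReal| ≤ ε} with hA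
  have hAmeas : MeasurableSet A := by
    have : Measurable fun x => |Real.log (P.rnDeriv Q x).toReal| :=
      ((Real.measurable_log.comp (Measure.measurable_rnDeriv P Q).ennreal_toReal).abs)
    exact measurableSet_le this measurable_const
  -- bound on the complement
  have hcompl : P Aᶜ ≤ ENNReal.ofReal δ := by
    rw [prob_compl_eq_one_sub hAmeas]
    have h1 : ENNReal.ofReal (1 - δ) = 1 - ENNReal.ofReal δ := by
      rw [ENNReal.ofReal_sub _ hδ.1, ENNReal.ofReal_one]
    calc 1 - P A ≤ 1 - ENNReal.ofReal (1 - δ) := tsub_le_tsub_left h 1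
      _ = 1 - (1 - ENNReal.ofReal δ) := by rw [h1]
      _ ≤ ENNReal.ofReal δ := by
          exact tsub_tsub_le_tsub_add.trans (by simp)
  -- bound on the main part
  have hmain : P (S ∩ A) ≤ ENNReal.ofReal (Real.exp ε) * Q S := by
    have hrw : P (S ∩ A) = ∫⁻ x in S ∩ A, P.rnDeriv Q x ∂Q := by
      conv_lhs => rw [← Measure.withDensity_rnDeriv_eq P Q hPQ]
      rw [withDensity_apply _ (hS.inter hAmeas)]
    rw [hrw]
    have hbound : ∀ᵐ x ∂(Q.restrict (S ∩ A)),
        P.rnDeriv Q x ≤ ENNReal.ofReal (Real.exp ε) := by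
      have hfin : ∀ᵐ x ∂(Q.restrict (S ∩ A)), P.rnDeriv Q x < ⊤ :=
        ae_restrict_of_ae (Measure.rnDeriv_lt_top P Q)
      have hmem : ∀ᵐ x ∂(Q.restrict (S ∩ A)), x ∈ S ∩ A :=
        ae_restrict_mem (hS.inter hAmeas)
      filter_upwards [hfin, hmem] with x hx hxA
      have hlog : |Real.log (P.rnDeriv Q x).toReal| ≤ ε := hxA.2
      have : Real.log (P.rnDeriv Q x).toReal ≤ ε := (abs_le.mp hlog).2
      have hle : (P.rnDeriv Q x).toReal ≤ Real.exp ε := by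
        rcases le_or_gt (P.rnDeriv Q x).toReal 0 with h0 | h0
        · exact h0.trans (Real.exp_pos ε).le
        · calc (P.rnDeriv Q x).toReal
              = Real.exp (Real.log (P.rnDeriv Q x).toReal) := (Real.exp_log h0).symm
            _ ≤ Real.exp ε := Real.exp_le_exp.mpr this
      calc P.rnDeriv Q x = ENNReal.ofReal (P.rnDeriv Q x).toReal := by
            rw [ENNReal.ofReal_toReal hx.ne]
        _ ≤ ENNReal.ofReal (Real.exp ε) := ENNReal.ofReal_le_ofReal hle
    calc ∫⁻ x in S ∩ A, P.rnDeriv Q x ∂Q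
        ≤ ∫⁻ _ in S ∩ A, ENNReal.ofReal (Real.exp ε) ∂Q := lintegral_mono_ae hbound
      _ = ENNReal.ofReal (Real.exp ε) * Q (S ∩ A) := by
          rw [setLIntegral_const]
      _ ≤ ENNReal.ofReal (Real.exp ε) * Q S :=
          mul_le_mul_right (measure_mono Set.inter_subset_left) _
  calc P S ≤ P (S ∩ A) + P (S ∩ Aᶜ) := by
        rw [← measure_inter_add_diff S hAmeas]; simp [Set.diff_eq]
    _ ≤ ENNReal.ofReal (Real.exp ε) * Q S + ENNReal.ofReal δ := by
        exact add_le_add hmain ((measure_mono Set.inter_subset_right).trans hcompl)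
end

section
/- (Truncation compatibility identity, from the proof of Theorem 4.2.) In the setting of the truncated odometer with truncation level ε_f: for b ∈ {0,1}, let Vᵇ be the joint measure composed from the original kernels κ₁ᵇ, …, κₙᵇ, and let Ṽᵇ be the joint measure composed from the truncated kernels κ̃₁ᵇ, …, κ̃ₙᵇ. Then for every measurable set A of trajectories contained in {v ∈ Y₁ × ⋯ × Yₙ : ∑_{i=1}^{n} εᵢ(v_{≤ i−1}) ≤ ε_f} (a set of trajectories with no ⊥ coordinate), Vᵇ(A) = Ṽᵇ(A). -/
open MeasureTheory ProbabilityTheory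

universe u

/-- The natural σ-algebra on `Y ∪ {⊥}`, modeled as `Option Y`. -/
instance optionMeasurableSpace {X : Type u} [MeasurableSpace X] :
    MeasurableSpace (Option X) :=
  MeasurableSpace.comap (Equiv.optionEquivSumPUnit.{u, u} X) inferInstance

/-- The measurable equivalence underlying `optionMeasurableSpace`. -/
def optionMeasEquiv (X : Type u) [MeasurableSpace X] :
    Option X ≃ᵐ (X ⊕ PUnit.{u + 1}) where
  toEquiv := Equiv.optionEquivSumPUnit X
  measurable_toFun := fun s hs => ⟨s, hs, rfl⟩
  measurable_invFun := by
    intro s hs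
    obtain ⟨t, ht, rfl⟩ := hs
    simpa [Set.preimage_preimage] using ht

theorem measurableEmbedding_some {X : Type u} [MeasurableSpace X] :
    MeasurableEmbedding (some : X → Option X) := by
  have h : (some : X → Option X) = (optionMeasEquiv X).symm ∘ Sum.inl := by
    funext x
    exact rfl
  have hinl : MeasurableEmbedding (Sum.inl : X → X ⊕ PUnit.{u + 1}) :=
    ⟨Sum.inl_injective, measurable_inl, fun {s} hs => hs.inl_image⟩
  rw [h]
  exact (optionMeasEquiv X).symm.measurableEmbedding.comp hinl

theorem measurable_some' {X : Type u} [MeasurableSpace X] :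
    Measurable (some : X → Option X) :=
  measurableEmbedding_some.measurable

/-- A product of measurable embeddings (over `Fin n`) is a measurable embedding. -/
theorem measurableEmbedding_piMap {n : ℕ} {Z W : Fin n → Type u}
    [∀ j, MeasurableSpace (Z j)] [∀ j, MeasurableSpace (W j)]
    (f : ∀ j, Z j → W j) (hf : ∀ j, MeasurableEmbedding (f j)) :
    MeasurableEmbedding (fun (v : ∀ j, Z j) (j : Fin n) => f j (v j)) := by
  set F : (∀ j, Z j) → (∀ j, W j) := fun v j => f j (v j) with hF
  have hinj : Function.Injective F := fun v w h =>
    funext fun j => (hf j).injective (congrFun h j)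
  have hmeas : Measurable F :=
    measurable_pi_lambda _ fun j => (hf j).measurable.comp (measurable_pi_apply _)
  have hrange : Set.range F = ⋂ j, (fun w : ∀ j, W j => w j) ⁻¹' Set.range (f j) := by
    ext w
    constructor
    · rintro ⟨v, rfl⟩
      exact Set.mem_iInter.2 fun j => ⟨v j, rfl⟩
    · intro hw
      have h' := Set.mem_iInter.1 hw
      refine ⟨fun j => Classical.choose (h' j), funext fun j => ?_⟩
      exact Classical.choose_spec (h' j)
  have hrange_meas : MeasurableSet (Set.range F) := by
    rw [hrange]
    exact MeasurableSet.iInter fun j =>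
      (measurable_pi_apply j) (hf j).measurableSet_range
  have himg : ∀ s : Set (∀ j, Z j), MeasurableSet s → MeasurableSet (F '' s) := by
    intro s hs
    -- the collection of sets whose image is measurable is a σ-algebra
    let m' : MeasurableSpace (∀ j, Z j) :=
      { MeasurableSet' := fun t => MeasurableSet (F '' t)
        measurableSet_empty := by simp
        measurableSet_compl := by
          intro t ht
          have : F '' tᶜ = Set.range F \ F '' t := by
            ext w
            constructor
            · rintro ⟨v, hv, rfl⟩
              exact ⟨⟨v, rfl⟩, fun ⟨v', hv', he⟩ => hv (hinj he ▸ hv')⟩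
            · rintro ⟨⟨v, rfl⟩, hw⟩
              exact ⟨v, fun hv => hw ⟨v, hv, rfl⟩, rfl⟩
          rw [this]
          exact hrange_meas.diff ht
        measurableSet_iUnion := by
          intro g hg
          rw [Set.image_iUnion]
          exact MeasurableSet.iUnion hg }
    have hle : (MeasurableSpace.pi : MeasurableSpace (∀ j, Z j)) ≤ m' := by
      refine iSup_le fun j => ?_
      intro t ht
      obtain ⟨t', ht', rfl⟩ := ht
      show MeasurableSet (F '' ((fun v : ∀ j, Z j => v j) ⁻¹' t'))
      have : F '' ((fun v : ∀ j, Z j => v j) ⁻¹' t')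
          = Set.range F ∩ ((fun w : ∀ j, W j => w j) ⁻¹' (f j '' t')) := by
        ext w
        constructor
        · rintro ⟨v, hv, rfl⟩
          exact ⟨⟨v, rfl⟩, ⟨v j, hv, rfl⟩⟩
        · rintro ⟨⟨v, rfl⟩, hw⟩
          obtain ⟨z, hz, hze⟩ := hw
          refine ⟨v, ?_, rfl⟩
          show v j ∈ t'
          rwa [← (hf j).injective hze]
        
      rw [this]
      exact hrange_meas.inter ((measurable_pi_apply j) ((hf j).measurableSet_image.2 ht'))
    exact hle s hs
  exact ⟨hinj, hmeas, fun {s} hs => himg s hs⟩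


/-- The joint measure on trajectories obtained by iterated composition of a sequence of
kernels, where the `i`-th kernel takes as input the first `i` outcomes. -/
noncomputable def jointMeasure {Y : ℕ → Type*} [∀ i, MeasurableSpace (Y i)]
    (κ : ∀ i, Kernel (∀ j : Fin i, Y j) (Y i)) :
    (n : ℕ) → Measure (∀ j : Fin n, Y j)
  | 0 => Measure.dirac (fun j => j.elim0)
  | (n + 1) => (jointMeasure κ n).bind (fun v => ((κ n) v).map (Fin.snoc v))

/-- The joint measure of the original (non-truncated) interaction: kernels take `⊥`-extended
prefixes as input but the original interaction only produces non-`⊥` outcomes, which are fed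
back embedded via `some`. -/
noncomputable def jointOrig {Y : ℕ → Type u} [∀ i, MeasurableSpace (Y i)]
    (κ : ∀ i, Kernel (∀ j : Fin i, Option (Y j)) (Y i)) :
    (n : ℕ) → Measure (∀ j : Fin n, Y j)
  | 0 => Measure.dirac (fun j => j.elim0)
  | (n + 1) => (jointOrig κ n).bind
      (fun v => ((κ n) (fun j => some (v j))).map (Fin.snoc v))

/-- Running budget used after step `i` on the prefix `v` (including step `i`'s budget):
`∑_{j=0}^{i} ε_j(v_{≤ j-1})`. -/
noncomputable def cumBudget {Y : ℕ → Type u}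
    (ε : ∀ i : ℕ, (∀ j : Fin i, Option (Y j)) → ℝ)
    (i : ℕ) (v : ∀ j : Fin i, Option (Y j)) : ℝ :=
  ∑ j : Fin (i + 1),
    ε j (fun k : Fin j => v ⟨k.1, lt_of_lt_of_le k.2 (Nat.lt_succ_iff.mp j.2)⟩)

theorem measurable_snocRight {n : ℕ} {Z : ℕ → Type u} [∀ i, MeasurableSpace (Z i)]
    (w : ∀ j : Fin n, Z j) :
    Measurable (fun z : Z n => (Fin.snoc w z : ∀ j : Fin (n + 1), Z j)) := by
  apply measurable_pi_lambda
  intro j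
  refine Fin.lastCases ?_ ?_ j
  · simp [Fin.snoc_last]; exact measurable_id
  · intro i
    simpa [Fin.snoc_castSucc] using measurable_const

theorem measurable_snocPair {n : ℕ} {Z : ℕ → Type u} [∀ i, MeasurableSpace (Z i)] :
    Measurable (fun p : (∀ j : Fin n, Z j) × Z n =>
      (Fin.snoc p.1 p.2 : ∀ j : Fin (n + 1), Z j)) := by
  apply measurable_pi_lambda
  intro j
  refine Fin.lastCases ?_ ?_ j
  · simpa [Fin.snoc_last] using measurable_snd
  · intro i
    simp [Fin.snoc_castSucc]; exact (measurable_pi_apply i).comp measurable_fst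

theorem measurable_stepMap {n : ℕ} {Z : ℕ → Type u} [∀ i, MeasurableSpace (Z i)]
    (k : Kernel (∀ j : Fin n, Z j) (Z n)) [IsMarkovKernel k] :
    Measurable (fun v => ((k v).map (Fin.snoc v) : Measure (∀ j : Fin (n + 1), Z j))) := by
  have h : (fun v => ((k v).map (Fin.snoc v) : Measure (∀ j : Fin (n + 1), Z j)))
      = fun v => ((Kernel.id ×ₖ k).map
          (fun p : (∀ j : Fin n, Z j) × Z n => Fin.snoc p.1 p.2)) v := by
    funext v
    rw [Kernel.map_apply _ measurable_snocPair, Kernel.prod_apply, Kernel.id_apply,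
      Measure.dirac_prod, Measure.map_map measurable_snocPair measurable_prodMk_left]
    rfl
  rw [h]
  exact Kernel.measurable _

theorem jointMeasure_succ_apply {Z : ℕ → Type u} [∀ i, MeasurableSpace (Z i)]
    (k : ∀ i, Kernel (∀ j : Fin i, Z j) (Z i)) [∀ i, IsMarkovKernel (k i)]
    (n : ℕ) {s : Set (∀ j : Fin (n + 1), Z j)} (hs : MeasurableSet s) :
    jointMeasure k (n + 1) s = ∫⁻ v, ((k n) v).map (Fin.snoc v) s ∂ jointMeasure k n := by
  rw [jointMeasure, Measure.bind_apply hs (measurable_stepMap (k n)).aemeasurable]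

section Main

variable {Y : ℕ → Type u} [∀ i, MeasurableSpace (Y i)]

/-- Coordinatewise embedding of trajectories into `⊥`-extended trajectories. -/
def emb (n : ℕ) : (∀ j : Fin n, Y j) → (∀ j : Fin n, Option (Y j)) :=
  fun v j => some (v j)

theorem measurable_emb (n : ℕ) : Measurable (emb (Y := Y) n) :=
  measurable_pi_lambda _ fun j => measurable_some'.comp (measurable_pi_apply _)

theorem measurableEmbedding_emb (n : ℕ) : MeasurableEmbedding (emb (Y := Y) n) :=
  measurableEmbedding_piMap _ fun _ => measurableEmbedding_some

theorem emb_snoc {n : ℕ} (u : ∀ j : Fin n, Y j) (y : Y n) :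
    emb (n + 1) (Fin.snoc u y) = Fin.snoc (emb n u) (some y) := by
  funext j
  refine Fin.lastCases ?_ ?_ j
  · simp [emb, Fin.snoc_last]
  · intro i
    simp [emb, Fin.snoc_castSucc]

theorem jointOrig_succ_apply (κ : ∀ i, Kernel (∀ j : Fin i, Option (Y j)) (Y i))
    [∀ i, IsMarkovKernel (κ i)] (n : ℕ) {s : Set (∀ j : Fin (n + 1), Y j)}
    (hs : MeasurableSet s) :
    jointOrig κ (n + 1) s
      = ∫⁻ v, ((κ n) (emb n v)).map (Fin.snoc v) s ∂ jointOrig κ n := by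
  have hmeas : Measurable (fun v => (((κ n) (emb n v)).map (Fin.snoc v) :
      Measure (∀ j : Fin (n + 1), Y j))) := by
    have := measurable_stepMap ((κ n).comap (emb n) (measurable_emb n))
    simpa [Kernel.comap_apply] using this
  rw [jointOrig]
  exact Measure.bind_apply hs hmeas.aemeasurable

variable (ε : ∀ i : ℕ, (∀ j : Fin i, Option (Y j)) → ℝ) (εf : ℝ)

/-- Trajectories whose total budget is within `εf`. -/
def Bset (n : ℕ) : Set (∀ j : Fin n, Y j) :=
  {v | ∑ i : Fin n, ε i (fun k : Fin i => some (v ⟨k.1, lt_trans k.2 i.2⟩)) ≤ εf}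

/-- Trajectories whose budget including the next step is within `εf`. -/
def Dset (n : ℕ) : Set (∀ j : Fin n, Y j) :=
  {u | cumBudget ε n (emb n u) ≤ εf}

theorem measurable_cumBudget (hε_meas : ∀ i, Measurable (ε i)) (n : ℕ) :
    Measurable (cumBudget ε n) := by
  apply Finset.measurable_sum
  intro j _
  exact (hε_meas j).comp (measurable_pi_lambda _ fun k => measurable_pi_apply _)

theorem measurableSet_Bset (hε_meas : ∀ i, Measurable (ε i)) (n : ℕ) :
    MeasurableSet (Bset (Y := Y) ε εf n) := by
  have : Measurable (fun v : ∀ j : Fin n, Y j =>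
      ∑ i : Fin n, ε i (fun k : Fin i => some (v ⟨k.1, lt_trans k.2 i.2⟩))) := by
    apply Finset.measurable_sum
    intro i _
    exact (hε_meas i).comp
      (measurable_pi_lambda _ fun k => measurable_some'.comp (measurable_pi_apply _))
  exact measurableSet_le this measurable_const

theorem measurableSet_Dset (hε_meas : ∀ i, Measurable (ε i)) (n : ℕ) :
    MeasurableSet (Dset (Y := Y) ε εf n) :=
  measurableSet_le ((measurable_cumBudget ε hε_meas n).comp (measurable_emb n))
    measurable_const

theorem Dset_subset_Bset (hε_nonneg : ∀ i v, 0 ≤ ε i v) (n : ℕ) :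
    Dset (Y := Y) ε εf n ⊆ Bset ε εf n := by
  intro u hu
  have hcum : cumBudget ε n (emb n u)
      = (∑ i : Fin n, ε i (fun k : Fin i => some (u ⟨k.1, lt_trans k.2 i.2⟩)))
        + ε n (emb n u) := by
    rw [cumBudget, Fin.sum_univ_castSucc]
    rfl
  have hu' : cumBudget ε n (emb n u) ≤ εf := hu
  rw [hcum] at hu'
  exact le_trans (le_add_of_nonneg_right (hε_nonneg n (emb n u))) hu'

theorem mem_Bset_succ {n : ℕ} (v : ∀ j : Fin (n + 1), Y j) :
    v ∈ Bset (Y := Y) ε εf (n + 1) ↔ Fin.init v ∈ Dset ε εf n :=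
  Iff.rfl

end Main

section Key

variable {Y : ℕ → Type u} [∀ i, MeasurableSpace (Y i)]

theorem key_restrict_eq (κ : ∀ i, Kernel (∀ j : Fin i, Option (Y j)) (Y i))
    [∀ i, IsMarkovKernel (κ i)]
    (ε : ∀ i : ℕ, (∀ j : Fin i, Option (Y j)) → ℝ)
    (hε_nonneg : ∀ i v, 0 ≤ ε i v) (hε_meas : ∀ i, Measurable (ε i))
    (εf : ℝ)
    (tκ : ∀ i, Kernel (∀ j : Fin i, Option (Y j)) (Option (Y i)))
    [∀ i, IsMarkovKernel (tκ i)]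
    (htκ : ∀ i (v : ∀ j : Fin i, Option (Y j)),
      ((cumBudget ε i v ≤ εf ∧ ∀ j, v j ≠ none) →
        (tκ i) v = ((κ i) v).map Option.some) ∧
      (¬(cumBudget ε i v ≤ εf ∧ ∀ j, v j ≠ none) →
        (tκ i) v = Measure.dirac (none : Option (Y i)))) :
    ∀ n : ℕ,
      Measure.map (emb n) ((jointOrig κ n).restrict (Bset ε εf n))
        = (jointMeasure (Y := fun i => Option (Y i)) tκ n).restrict
            (emb n '' Bset ε εf n) := by
  intro n
  induction n with
  | zero =>
    by_cases h0 : (0 : ℝ) ≤ εf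
    · have hB : Bset (Y := Y) ε εf 0 = Set.univ :=
        Set.eq_univ_of_forall fun v => by simpa [Bset] using h0
      haveI : Subsingleton (∀ j : Fin 0, Option (Y j)) :=
        ⟨fun v w => funext fun j => j.elim0⟩
      have hr : emb (Y := Y) 0 '' Set.univ = Set.univ :=
        Set.eq_univ_of_forall fun w =>
          ⟨fun j => j.elim0, Set.mem_univ _, Subsingleton.elim _ _⟩
    
      rw [hB, hr, Measure.restrict_univ, Measure.restrict_univ]
      have h1 : jointOrig κ 0 = Measure.dirac (fun j : Fin 0 => j.elim0) := rfl
      have h2 : jointMeasure (Y := fun i => Option (Y i)) tκ 0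
          = Measure.dirac (fun j : Fin 0 => j.elim0) := rfl
      rw [h1, h2, Measure.map_dirac' (measurable_emb 0)]
      exact congrArg _ (Subsingleton.elim _ _)
    · have hB : Bset (Y := Y) ε εf 0 = ∅ :=
        Set.eq_empty_iff_forall_notMem.2 fun v hv => h0 (by simpa [Bset] using hv)
      rw [hB]
      simp
  | succ n ih =>
    have hB' : MeasurableSet (Bset (Y := Y) ε εf (n + 1)) :=
      measurableSet_Bset ε εf hε_meas (n + 1)
    have hD : MeasurableSet (Dset (Y := Y) ε εf n) := measurableSet_Dset ε εf hε_meas n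
    have hBn : MeasurableSet (Bset (Y := Y) ε εf n) := measurableSet_Bset ε εf hε_meas n
    have hM : MeasurableSet (emb (n + 1) '' Bset (Y := Y) ε εf (n + 1)) :=
      (measurableEmbedding_emb (n + 1)).measurableSet_image.2 hB'
    have hDi : MeasurableSet (emb n '' Dset (Y := Y) ε εf n) :=
      (measurableEmbedding_emb n).measurableSet_image.2 hD
    have hsubD : Dset (Y := Y) ε εf n ⊆ Bset ε εf n := Dset_subset_Bset ε εf hε_nonneg n
    refine Measure.ext fun C hC => ?_
    set M := emb (n + 1) '' Bset (Y := Y) ε εf (n + 1) with hMdef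
    set F : (∀ j : Fin n, Y j) → ENNReal := fun u =>
      (κ n) (emb n u) ((fun y : Y n => Fin.snoc (emb n u) (some y)) ⁻¹' C) with hFdef
    have hsnocB : ∀ (u : ∀ j : Fin n, Y j) (y : Y n),
        Fin.snoc u y ∈ Bset (Y := Y) ε εf (n + 1) ↔ u ∈ Dset ε εf n := by
      intro u y
      rw [mem_Bset_succ, Fin.init_snoc]
    -- LHS computation
    have hLHS : Measure.map (emb (n + 1))
          ((jointOrig κ (n + 1)).restrict (Bset ε εf (n + 1))) C
        = ∫⁻ u in Dset ε εf n, F u ∂ jointOrig κ n := by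
      rw [Measure.map_apply (measurable_emb (n + 1)) hC,
        Measure.restrict_apply (measurable_emb (n + 1) hC),
        jointOrig_succ_apply κ n ((measurable_emb (n + 1) hC).inter hB'),
        ← lintegral_indicator hD F]
      refine lintegral_congr fun u => ?_
      rw [Measure.map_apply (measurable_snocRight u)
        ((measurable_emb (n + 1) hC).inter hB')]
      by_cases hu : u ∈ Dset (Y := Y) ε εf n
      · rw [Set.indicator_of_mem hu, hFdef]
        congr 1
        ext y
        simp only [Set.mem_preimage, Set.mem_inter_iff]
        constructor
        · rintro ⟨h1, -⟩
          rw [← emb_snoc]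
          exact h1
        · intro h1
          exact ⟨by rw [emb_snoc]; exact h1, (hsnocB u y).2 hu⟩
      · rw [Set.indicator_of_notMem hu]
        have hempty : Fin.snoc u ⁻¹' (emb (n + 1) ⁻¹' C ∩ Bset ε εf (n + 1))
            = (∅ : Set (Y n)) :=
          Set.eq_empty_iff_forall_notMem.2 fun y hy => hu ((hsnocB u y).1 hy.2)
        rw [hempty]
        simp
    -- RHS computation
    set G : (∀ j : Fin n, Option (Y j)) → ENNReal := fun w =>
      ((tκ n) w).map (Fin.snoc w) (C ∩ M) with hGdef
    have hG : Measurable G :=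
      (Measure.measurable_coe (hC.inter hM)).comp (measurable_stepMap (Z := fun i => Option (Y i)) (tκ n))
    have hGF : ∀ u ∈ Dset (Y := Y) ε εf n, G (emb n u) = F u := by
      intro u hu
      have ht := (htκ n (emb n u)).1 ⟨hu, fun j => by simp [emb]⟩
      rw [hGdef]
      show ((tκ n) (emb n u)).map (Fin.snoc (emb n u)) (C ∩ M) = F u
      rw [ht, Measure.map_map (measurable_snocRight (Z := fun i => Option (Y i)) (emb n u)) measurable_some',
        Measure.map_apply ((measurable_snocRight (Z := fun i => Option (Y i)) (emb n u)).comp measurable_some')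
          (hC.inter hM)]
      congr 1
      ext y
      simp only [Set.mem_preimage, Function.comp_apply, Set.mem_inter_iff]
      constructor
      · rintro ⟨h1, -⟩
        exact h1
      · intro h1
        refine ⟨h1, ?_⟩
        rw [← emb_snoc]
        exact ⟨Fin.snoc u y, (hsnocB u y).2 hu, rfl⟩
    have hGzero : ∀ w, w ∉ emb n '' Dset (Y := Y) ε εf n → G w = 0 := by
      intro w hw
      by_cases hcase : cumBudget ε n w ≤ εf ∧ ∀ j, w j ≠ none
      · exfalso
        apply hw
        have hsome : ∀ j, (w j).isSome := fun j =>
          Option.ne_none_iff_isSome.1 (hcase.2 j)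
        have hwe : (emb n fun j => (w j).get (hsome j)) = w :=
          funext fun j => Option.some_get (hsome j)
        refine ⟨fun j => (w j).get (hsome j), ?_, hwe⟩
        show cumBudget ε n (emb n fun j => (w j).get (hsome j)) ≤ εf
        rw [hwe]
        exact hcase.1
      · rw [hGdef]
        show ((tκ n) w).map (Fin.snoc w) (C ∩ M) = 0
        rw [(htκ n w).2 hcase, Measure.map_dirac' (measurable_snocRight (Z := fun i => Option (Y i)) w),
          Measure.dirac_apply' _ (hC.inter hM)]
        apply Set.indicator_of_notMem
        rintro ⟨-, hmem⟩
        obtain ⟨v, -, hv⟩ := hmem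
        have hlast := congrFun hv (Fin.last n)
        simp [emb, Fin.snoc_last] at hlast
    have hRHS : ((jointMeasure (Y := fun i => Option (Y i)) tκ (n + 1)).restrict M) C
        = ∫⁻ u in Dset ε εf n, F u ∂ jointOrig κ n := by
      rw [Measure.restrict_apply hC, jointMeasure_succ_apply (Z := fun i => Option (Y i)) tκ n (hC.inter hM)]
      have step1 : ∫⁻ w, ((tκ n) w).map (Fin.snoc w) (C ∩ M)
            ∂ jointMeasure (Y := fun i => Option (Y i)) tκ n
          = ∫⁻ w in emb n '' Dset ε εf n, G w
            ∂ jointMeasure (Y := fun i => Option (Y i)) tκ n := by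
        rw [← lintegral_indicator hDi G]
        refine lintegral_congr fun w => ?_
        by_cases hw : w ∈ emb n '' Dset (Y := Y) ε εf n
        · rw [Set.indicator_of_mem hw]
        · rw [Set.indicator_of_notMem hw]
          exact hGzero w hw
      have hres : (jointMeasure (Y := fun i => Option (Y i)) tκ n).restrict
            (emb n '' Dset ε εf n)
          = (Measure.map (emb n) ((jointOrig κ n).restrict (Bset ε εf n))).restrict
            (emb n '' Dset ε εf n) := by
        rw [ih, Measure.restrict_restrict hDi,
          Set.inter_eq_self_of_subset_left (Set.image_mono hsubD)]
      rw [step1]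
      show ∫⁻ w, G w ∂ ((jointMeasure (Y := fun i => Option (Y i)) tκ n).restrict
        (emb n '' Dset ε εf n)) = _
      rw [hres, Measure.restrict_map (measurable_emb n) hDi]
      rw [lintegral_map hG (measurable_emb n)]
      have hpre : emb n ⁻¹' (emb n '' Dset (Y := Y) ε εf n) = Dset ε εf n :=
        Set.preimage_image_eq _ (measurableEmbedding_emb n).injective
      rw [hpre, Measure.restrict_restrict hD,
        Set.inter_eq_self_of_subset_left hsubD]
      exact setLIntegral_congr_fun hD hGF
    exact hLHS.trans hRHS.symm

end Key

/-- Truncation compatibility identity (from the proof of Theorem 4.2): on any measurable set of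
trajectories whose total budget stays within the truncation level `ε_f` (hence with no `⊥`
coordinate), the original joint measure and the truncated joint measure agree. -/
theorem trunc_compatibility {Y : ℕ → Type u} [∀ i, MeasurableSpace (Y i)]
    (n : ℕ)
    (κ : ∀ i, Kernel (∀ j : Fin i, Option (Y j)) (Y i))
    [∀ i, IsMarkovKernel (κ i)]
    (ε : ∀ i : ℕ, (∀ j : Fin i, Option (Y j)) → ℝ)
    (hε_nonneg : ∀ i v, 0 ≤ ε i v)
    (hε_meas : ∀ i, Measurable (ε i))
    (εf : ℝ)
    (tκ : ∀ i, Kernel (∀ j : Fin i, Option (Y j)) (Option (Y i)))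
    (htκ : ∀ i (v : ∀ j : Fin i, Option (Y j)),
      ((cumBudget ε i v ≤ εf ∧ ∀ j, v j ≠ none) →
        (tκ i) v = ((κ i) v).map Option.some) ∧
      (¬(cumBudget ε i v ≤ εf ∧ ∀ j, v j ≠ none) →
        (tκ i) v = Measure.dirac (none : Option (Y i)))) :
    ∀ A : Set (∀ j : Fin n, Y j), MeasurableSet A →
      (∀ v ∈ A, ∑ i : Fin n,
        ε i (fun k : Fin i => some (v ⟨k.1, lt_trans k.2 i.2⟩)) ≤ εf) →
      jointOrig κ n A =
        jointMeasure (Y := fun i => Option (Y i)) tκ n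
          ((fun (v : ∀ j : Fin n, Y j) (j : Fin n) => some (v j)) '' A) := by
  intro A hA hbud
  haveI hMk : ∀ i, IsMarkovKernel (tκ i) := fun i => ⟨fun v => by
    by_cases h : cumBudget ε i v ≤ εf ∧ ∀ j, v j ≠ none
    · rw [(htκ i v).1 h]
      exact Measure.isProbabilityMeasure_map measurable_some'.aemeasurable
    · rw [(htκ i v).2 h]
      infer_instance⟩
  have hsub : A ⊆ Bset ε εf n := fun v hv => hbud v hv
  have hAim : MeasurableSet (emb n '' A) :=
    (measurableEmbedding_emb n).measurableSet_image.2 hA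
  have hkey := key_restrict_eq κ ε hε_nonneg hε_meas εf tκ htκ n
  show jointOrig κ n A = jointMeasure (Y := fun i => Option (Y i)) tκ n (emb n '' A)
  calc jointOrig κ n A = ((jointOrig κ n).restrict (Bset ε εf n)) A := by
        rw [Measure.restrict_apply hA, Set.inter_eq_self_of_subset_left hsub]
    _ = (Measure.map (emb n) ((jointOrig κ n).restrict (Bset ε εf n))) (emb n '' A) := by
        rw [Measure.map_apply (measurable_emb n) hAim,
          Set.preimage_image_eq _ (measurableEmbedding_emb n).injective]
    _ = ((jointMeasure (Y := fun i => Option (Y i)) tκ n).restrict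
          (emb n '' Bset ε εf n)) (emb n '' A) := by rw [hkey]
    _ = jointMeasure (Y := fun i => Option (Y i)) tκ n (emb n '' A) := by
        rw [Measure.restrict_apply hAim,
          ← Set.image_inter (measurableEmbedding_emb n).injective,
          Set.inter_eq_self_of_subset_left hsub]
end
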